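/- Let N ∈ ℕ, let f : [0,1] → ℝ^N be continuous, and let u ∈ [0,1]. Then for every multi-index I = (i_1,…,i_m), S^I_{[0,1]}(f) = Σ_{j=0}^{m} S^{(i_1,…,i_j)}_{[0,u]}(f) · S^{(i_{j+1},…,i_m)}_{[u,1]}(f), where the signature coefficient with respect to the empty multi-index equals 1. (Chen's identity: the path signature is multiplicative under concatenation of paths, S(α * β) = S(α) ⊗ S(β).) -/

import Mathlib

open MeasureTheory

/-- The simplex of nondecreasing `m`-tuples with entries in `[a,b]`. -/
def simplex (m : ℕ) (a b : ℝ) : Set (Fin m → ℝ) :=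
  {t | (∀ j, t j ∈ Set.Icc a b) ∧ ∀ j k : Fin m, j ≤ k → t j ≤ t k}

/-- The signature coefficient of `f : [a,b] → ℝ^N` over `[a,b]` with respect to a
multi-index `I`; for the empty multi-index (`m = 0`) it equals `1`. -/
noncomputable def sig {N : ℕ} (a b : ℝ) (f : ℝ → Fin N → ℝ) {m : ℕ}
    (I : Fin m → Fin N) : ℝ :=
  ∫ t in simplex m a b, ∏ j, f (t j) (I j)

lemma simplex_isClosed (m : ℕ) (a b : ℝ) : IsClosed (simplex m a b) := by
  have : simplex m a b =
      (⋂ j : Fin m, {t : Fin m → ℝ | t j ∈ Set.Icc a b}) ∩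
      (⋂ j : Fin m, ⋂ k : Fin m, {t : Fin m → ℝ | j ≤ k → t j ≤ t k}) := by
    ext t; simp [simplex, Set.mem_iInter]
  rw [this]
  refine IsClosed.inter (isClosed_iInter fun j => ?_)
    (isClosed_iInter fun j => isClosed_iInter fun k => ?_)
  · exact isClosed_Icc.preimage (continuous_apply j)
  · by_cases h : j ≤ k
    · simp only [h, forall_true_left]
      exact isClosed_le (continuous_apply j) (continuous_apply k)
    · simp only [h]; simp

lemma simplex_isCompact (m : ℕ) (a b : ℝ) : IsCompact (simplex m a b) := by
  refine IsCompact.of_isClosed_subset (isCompact_Icc (a := fun _ : Fin m => a)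
    (b := fun _ => b)) (simplex_isClosed m a b) ?_
  intro t ht
  exact ⟨fun j => (ht.1 j).1, fun j => (ht.1 j).2⟩

lemma integrand_contOn {N m : ℕ} (a b : ℝ) (f : ℝ → Fin N → ℝ)
    (hf : ContinuousOn f (Set.Icc a b)) (I : Fin m → Fin N) :
    ContinuousOn (fun t : Fin m → ℝ => ∏ j, f (t j) (I j)) (simplex m a b) := by
  refine continuousOn_finset_prod _ (fun i _ => ?_)
  exact (continuous_apply (I i)).comp_continuousOn
    (hf.comp (continuous_apply i).continuousOn (fun t ht => ht.1 i))

lemma integrand_integrableOn {N m : ℕ} (a b : ℝ) (f : ℝ → Fin N → ℝ)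
    (hf : ContinuousOn f (Set.Icc a b)) (I : Fin m → Fin N) :
    IntegrableOn (fun t : Fin m → ℝ => ∏ j, f (t j) (I j)) (simplex m a b) :=
  (integrand_contOn a b f hf I).integrableOn_compact (simplex_isCompact m a b)

/-- The piece of the simplex where the first `n` coordinates are `≤ u` and the rest `≥ u`. -/
def piece (m : ℕ) (u : ℝ) (n : ℕ) : Set (Fin m → ℝ) :=
  {t ∈ simplex m 0 1 | ∀ p : Fin m, ((p : ℕ) < n → t p ≤ u) ∧ (n ≤ (p : ℕ) → u ≤ t p)}

lemma piece_isClosed (m : ℕ) (u : ℝ) (n : ℕ) : IsClosed (piece m u n) := by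
  have : piece m u n = simplex m 0 1 ∩
      ((⋂ p : Fin m, {t : Fin m → ℝ | (p : ℕ) < n → t p ≤ u}) ∩
       (⋂ p : Fin m, {t : Fin m → ℝ | n ≤ (p : ℕ) → u ≤ t p})) := by
    ext t
    simp only [piece, Set.mem_setOf_eq, Set.mem_inter_iff, Set.mem_iInter, forall_and]
  rw [this]
  refine (simplex_isClosed m 0 1).inter (IsClosed.inter (isClosed_iInter fun p => ?_)
    (isClosed_iInter fun p => ?_))
  · by_cases h : (p : ℕ) < n
    · simp only [h, forall_true_left]
      exact isClosed_le (continuous_apply p) continuous_const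
    · simp only [h]; simp
  · by_cases h : n ≤ (p : ℕ)
    · simp only [h, forall_true_left]
      exact isClosed_le continuous_const (continuous_apply p)
    · simp only [h]; simp

lemma simplex_eq_iUnion_piece (m : ℕ) (u : ℝ) :
    simplex m 0 1 = ⋃ j : Fin (m + 1), piece m u (j : ℕ) := by
  classical
  ext t
  simp only [Set.mem_iUnion]
  constructor
  · intro ht
    set A : Finset (Fin m) := Finset.univ.filter (fun p => t p < u) with hA
    have hcard : A.card ≤ m := by
      simpa using Finset.card_le_card (Finset.subset_univ A)
    refine ⟨⟨A.card, by omega⟩, ht, fun p => ⟨?_, ?_⟩⟩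
    · intro hp
      simp only [Fin.val_mk] at hp
      by_contra hgt
      push_neg at hgt
      have hsub : A ⊆ Finset.Iio p := by
        intro q hq
        simp only [hA, Finset.mem_filter] at hq
        rw [Finset.mem_Iio]
        by_contra hle
        push_neg at hle
        exact absurd (lt_of_le_of_lt (ht.2 p q hle) hq.2) (not_lt.2 hgt.le)
      have := Finset.card_le_card hsub
      rw [Fin.card_Iio] at this
      omega
    · intro hp
      simp only [Fin.val_mk] at hp
      by_contra hlt
      push_neg at hlt
      have hsub : Finset.Iic p ⊆ A := by
        intro q hq
        rw [Finset.mem_Iic] at hq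
        simp only [hA, Finset.mem_filter]
        exact ⟨Finset.mem_univ q, lt_of_le_of_lt (ht.2 q p hq) hlt⟩
      have := Finset.card_le_card hsub
      rw [Fin.card_Iic] at this
      omega
  · rintro ⟨j, hj, -⟩
    exact hj

lemma piece_inter_null (m : ℕ) (u : ℝ) {j k : ℕ} (hj : j < k) (hk : k ≤ m) :
    volume (piece m u j ∩ piece m u k) = 0 := by
  have hjm : j < m := lt_of_lt_of_le hj hk
  set i : Fin m := ⟨j, hjm⟩ with hi
  have hsub : piece m u j ∩ piece m u k ⊆ {t : Fin m → ℝ | t i = u} := by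
    rintro t ⟨htj, htk⟩
    have h1 : u ≤ t i := (htj.2 i).2 (le_refl j)
    have h2 : t i ≤ u := (htk.2 i).1 hj
    exact le_antisymm h2 h1
  refine measure_mono_null hsub ?_
  rw [MeasureTheory.volume_pi]
  exact MeasureTheory.Measure.pi_hyperplane (μ := fun _ => (volume : Measure ℝ)) i u

lemma piece_eq {N m : ℕ} (n : ℕ) (hn : n ≤ m) (f : ℝ → Fin N → ℝ)
    (u : ℝ) (hu : u ∈ Set.Icc (0:ℝ) 1) (I : Fin m → Fin N) :
    ∫ t in piece m u n, ∏ i, f (t i) (I i) =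
      (∫ a in simplex n 0 u, ∏ p, f (a p) (I ⟨(p : ℕ), lt_of_lt_of_le p.2 hn⟩)) *
      (∫ b in simplex (m - n) u 1, ∏ q, f (b q) (I ⟨n + (q : ℕ), by omega⟩)) := by
  classical
  have hmn : n + (m - n) = m := by omega
  let σ : Fin n ⊕ Fin (m - n) ≃ Fin m := finSumFinEquiv.trans (finCongr hmn)
  have hσl : ∀ p : Fin n, (σ (Sum.inl p) : ℕ) = (p : ℕ) := fun p => by
    simp [σ]
  have hσr : ∀ q : Fin (m - n), (σ (Sum.inr q) : ℕ) = n + (q : ℕ) := fun q => by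
    simp [σ, Fin.natAdd]
  let E : ((Fin n → ℝ) × (Fin (m - n) → ℝ)) ≃ᵐ (Fin m → ℝ) :=
    (MeasurableEquiv.sumPiEquivProdPi (fun _ => ℝ)).symm.trans
      (MeasurableEquiv.piCongrLeft (fun _ => ℝ) σ)
  have hE : MeasurePreserving E volume volume :=
    (MeasureTheory.volume_measurePreserving_piCongrLeft (fun _ : Fin m => ℝ) σ).comp
      (MeasureTheory.volume_measurePreserving_sumPiEquivProdPi_symm
        (fun _ : Fin n ⊕ Fin (m - n) => ℝ))
  have hEapp : ∀ (x : (Fin n → ℝ) × (Fin (m - n) → ℝ)) (s : Fin n ⊕ Fin (m - n)),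
      E x (σ s) = Sum.elim x.1 x.2 s := by
    intro x s
    show (MeasurableEquiv.piCongrLeft (fun _ => ℝ) σ)
      ((MeasurableEquiv.sumPiEquivProdPi (fun _ => ℝ)).symm x) (σ s) = _
    rw [MeasurableEquiv.piCongrLeft_apply_apply]
    cases s <;> rfl
  have hpre : E ⁻¹' (piece m u n) = (simplex n 0 u) ×ˢ (simplex (m - n) u 1) := by
    ext x
    obtain ⟨a, b⟩ := x
    simp only [Set.mem_preimage, Set.mem_prod]
    constructor
    · rintro ⟨⟨hIcc, hmono⟩, hcut⟩
      refine ⟨⟨fun p => ?_, fun p p' hpp => ?_⟩, fun q => ?_, fun q q' hqq => ?_⟩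
      · have h1 := hIcc (σ (Sum.inl p))
        have h2 := (hcut (σ (Sum.inl p))).1 (by rw [hσl]; exact p.2)
        rw [hEapp ⟨a, b⟩ (Sum.inl p)] at h1 h2
        exact ⟨h1.1, h2⟩
      · have h := hmono (σ (Sum.inl p)) (σ (Sum.inl p'))
          (by rw [Fin.le_def, hσl, hσl]; exact hpp)
        rw [hEapp ⟨a, b⟩ (Sum.inl p), hEapp ⟨a, b⟩ (Sum.inl p')] at h
        exact h
      · have h1 := hIcc (σ (Sum.inr q))
        have h2 := (hcut (σ (Sum.inr q))).2 (by rw [hσr]; omega)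
        rw [hEapp ⟨a, b⟩ (Sum.inr q)] at h1 h2
        exact ⟨h2, h1.2⟩
      · have h := hmono (σ (Sum.inr q)) (σ (Sum.inr q'))
          (by rw [Fin.le_def, hσr, hσr]; simpa using hqq)
        rw [hEapp ⟨a, b⟩ (Sum.inr q), hEapp ⟨a, b⟩ (Sum.inr q')] at h
        exact h
    · rintro ⟨ha, hb⟩
      refine ⟨⟨fun i => ?_, fun i k hik => ?_⟩, fun i => ?_⟩
      · obtain ⟨s, rfl⟩ := σ.surjective i
        rw [hEapp]
        rcases s with p | q
        · exact ⟨(ha.1 p).1, le_trans (ha.1 p).2 hu.2⟩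
        · exact ⟨le_trans hu.1 (hb.1 q).1, (hb.1 q).2⟩
      · obtain ⟨s, rfl⟩ := σ.surjective i
        obtain ⟨s', rfl⟩ := σ.surjective k
        rw [hEapp, hEapp]
        rw [Fin.le_def] at hik
        rcases s with p | q <;> rcases s' with p' | q'
        · rw [hσl, hσl] at hik
          exact ha.2 p p' hik
        · exact le_trans (ha.1 p).2 (hb.1 q').1
        · rw [hσr, hσl] at hik
          have := q.2
          have := p'.2
          omega
        · rw [hσr, hσr] at hik
          exact hb.2 q q' (by omega)
      · obtain ⟨s, rfl⟩ := σ.surjective i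
        constructor <;> intro h
        · rcases s with p | q
          · rw [hEapp]
            exact (ha.1 p).2
          · rw [hσr] at h; omega
        · rcases s with p | q
          · rw [hσl] at h
            have := p.2
            omega
          · rw [hEapp]
            exact (hb.1 q).1
  have key : ∀ x : (Fin n → ℝ) × (Fin (m - n) → ℝ),
      (∏ i, f (E x i) (I i)) =
        (∏ p, f (x.1 p) (I ⟨(p : ℕ), lt_of_lt_of_le p.2 hn⟩)) *
        (∏ q, f (x.2 q) (I ⟨n + (q : ℕ), by omega⟩)) := by
    intro x
    rw [← Equiv.prod_comp σ (fun i => f (E x i) (I i))]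
    rw [Fintype.prod_sum_type]
    congr 1
    · refine Finset.prod_congr rfl fun p _ => ?_
      have hs : σ (Sum.inl p) = ⟨(p : ℕ), lt_of_lt_of_le p.2 hn⟩ := Fin.ext (hσl p)
      rw [hEapp x (Sum.inl p), hs]
      rfl
    · refine Finset.prod_congr rfl fun q _ => ?_
      have hs : σ (Sum.inr q) = ⟨n + (q : ℕ), by omega⟩ := Fin.ext (hσr q)
      rw [hEapp x (Sum.inr q), hs]
      rfl
  calc ∫ t in piece m u n, ∏ i, f (t i) (I i)
      = ∫ x in E ⁻¹' (piece m u n), ∏ i, f (E x i) (I i) :=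
        (hE.setIntegral_preimage_emb E.measurableEmbedding _ _).symm
    _ = ∫ x in (simplex n 0 u) ×ˢ (simplex (m - n) u 1),
          (∏ p, f (x.1 p) (I ⟨(p : ℕ), lt_of_lt_of_le p.2 hn⟩)) *
          (∏ q, f (x.2 q) (I ⟨n + (q : ℕ), by omega⟩)) := by
        rw [hpre]
        exact MeasureTheory.setIntegral_congr_fun
          ((simplex_isClosed n 0 u).measurableSet.prod
            (simplex_isClosed (m - n) u 1).measurableSet)
          (fun x _ => key x)
    _ = _ := by
        rw [MeasureTheory.Measure.volume_eq_prod]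
        exact MeasureTheory.setIntegral_prod_mul
          (fun a : Fin n → ℝ => ∏ p, f (a p) (I ⟨(p : ℕ), lt_of_lt_of_le p.2 hn⟩))
          (fun b : Fin (m - n) → ℝ => ∏ q, f (b q) (I ⟨n + (q : ℕ), by omega⟩))
          (simplex n 0 u) (simplex (m - n) u 1)


/-- **Chen's identity**: the path signature is multiplicative under concatenation,
`S^I_{[0,1]}(f) = Σ_{j=0}^m S^{(i_1,…,i_j)}_{[0,u]}(f) · S^{(i_{j+1},…,i_m)}_{[u,1]}(f)`. -/
theorem chen_identity (N : ℕ) (f : ℝ → Fin N → ℝ)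
    (hf : ContinuousOn f (Set.Icc 0 1)) (u : ℝ) (hu : u ∈ Set.Icc (0:ℝ) 1)
    (m : ℕ) (I : Fin m → Fin N) :
    sig 0 1 f I =
      ∑ j : Fin (m + 1),
        sig 0 u f (fun p : Fin (j : ℕ) =>
            I ⟨p.1, by have h1 := p.2; have h2 := j.2; omega⟩) *
        sig u 1 f (fun p : Fin (m - (j : ℕ)) =>
            I ⟨(j : ℕ) + p.1, by have h1 := p.2; have h2 := j.2; omega⟩) := by
  classical
  have hdisj : Pairwise (Function.onFun (MeasureTheory.AEDisjoint volume)
      fun j : Fin (m + 1) => piece m u (j : ℕ)) := by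
    intro j k hjk
    rcases Nat.lt_or_ge (j : ℕ) (k : ℕ) with h | h
    · exact piece_inter_null m u h (by omega)
    · have hk : (k : ℕ) < (j : ℕ) := by
        rcases Nat.lt_or_ge (k : ℕ) (j : ℕ) with h' | h'
        · exact h'
        · exact absurd (Fin.ext (le_antisymm h' h)) hjk
      have := piece_inter_null m u hk (by omega)
      rwa [Set.inter_comm] at this
  have h1 : sig 0 1 f I = ∑ j : Fin (m + 1),
      ∫ t in piece m u (j : ℕ), ∏ i, f (t i) (I i) := by
    rw [sig, simplex_eq_iUnion_piece m u,
      MeasureTheory.integral_iUnion_ae (s := fun j : Fin (m + 1) => piece m u (j : ℕ))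
        (fun j => (piece_isClosed m u (j : ℕ)).measurableSet.nullMeasurableSet)
        hdisj
        (by rw [← simplex_eq_iUnion_piece]
            exact integrand_integrableOn 0 1 f hf I),
      tsum_fintype]
  rw [h1]
  refine Finset.sum_congr rfl fun j _ => ?_
  have hj : (j : ℕ) ≤ m := by omega
  rw [piece_eq (j : ℕ) hj f u hu I]
  rfl
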